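/- Alive agents in histories of the canonical model: let h be a history of the canonical pseudo-model Mc of SC, and let Γ = last(h). Then, in the unravelling U(Mc), agent a is alive in h (i.e., h ∼^U_a h) if and only if alive_a ∈ Γ. -/

import Mathlib

attribute [local instance] Classical.propDecidable

noncomputable section

/-- Formulas of the epistemic language `L_D` with distributed knowledge `D_B`
for nonempty groups `B` of agents. -/
inductive Form (A AP : Type) : Type
  | atom : AP → Form A AP
  | neg  : Form A AP → Form A AP
  | and  : Form A AP → Form A AP → Form A AP
  | dk   : (B : Finset A) → B.Nonempty → Form A AP → Form A AP

namespace Form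

variable {A AP : Type}

/-- Disjunction, `φ ∨ ψ := ¬(¬φ ∧ ¬ψ)`. -/
def or (φ ψ : Form A AP) : Form A AP := neg ((neg φ).and (neg ψ))

/-- Implication, `φ ⇒ ψ := ¬φ ∨ ψ`. -/
def imp (φ ψ : Form A AP) : Form A AP := (neg φ).or ψ

/-- `⊤ := p ∨ ¬p`. -/
def verum [Nonempty AP] : Form A AP :=
  (atom (Classical.arbitrary AP)).or (neg (atom (Classical.arbitrary AP)))

/-- `⊥ := ¬⊤`. -/
def falsum [Nonempty AP] : Form A AP := neg verum

/-- Individual knowledge `K_a φ := D_{{a}} φ`. -/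
def K (a : A) (φ : Form A AP) : Form A AP := dk {a} (Finset.singleton_nonempty a) φ

/-- `dead_a := K_a ⊥`. -/
def deadAgent [Nonempty AP] (a : A) : Form A AP := K a falsum

/-- `alive_a := ¬dead_a`. -/
def aliveAgent [Nonempty AP] (a : A) : Form A AP := (deadAgent a).neg

/-- `alive_B := ¬ D_B ⊥`. -/
def aliveGrp [Nonempty AP] (B : Finset A) (hB : B.Nonempty) : Form A AP := (dk B hB falsum).neg

/-- Finite conjunction. -/
def bigAnd [Nonempty AP] : List (Form A AP) → Form A AP
  | [] => verum
  | φ :: t => φ.and (bigAnd t)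

/-- Finite disjunction. -/
def bigOr [Nonempty AP] : List (Form A AP) → Form A AP
  | [] => falsum
  | φ :: t => φ.or (bigOr t)

/-- `dead_C := ⋀_{a ∈ C} dead_a`. -/
def deadGrp [Nonempty AP] (C : Finset A) : Form A AP := bigAnd (C.toList.map deadAgent)

end Form

/-- A propositional tautology: true under every assignment that interprets `¬` and `∧`
classically (atoms and `D_B`-formulas are treated as opaque). -/
def IsTaut {A AP : Type} (φ : Form A AP) : Prop :=
  ∀ v : Form A AP → Prop,
    (∀ ψ : Form A AP, v ψ.neg ↔ ¬ v ψ) →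
    (∀ ψ χ : Form A AP, v (ψ.and χ) ↔ (v ψ ∧ v χ)) →
    v φ

theorem unionNE {α : Type} [DecidableEq α] {s t : Finset α} (h : s.Nonempty) :
    (s ∪ t).Nonempty :=
  ⟨h.choose, Finset.mem_union_left _ h.choose_spec⟩

section ProofSystem

variable {A AP : Type} [Fintype A] [Nonempty AP]

/-- The proof system `SC` (axioms `K`, `B`, `4`, `Mono`, `Union`, `NE`, `P`, all
propositional tautologies, modus ponens and necessitation), extended by an arbitrary
additional set `Ax` of axioms. -/
inductive Prf (Ax : Form A AP → Prop) : Form A AP → Prop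
  | taut {φ : Form A AP} : IsTaut φ → Prf Ax φ
  | mp {φ ψ : Form A AP} : Prf Ax (φ.imp ψ) → Prf Ax φ → Prf Ax ψ
  | nec {φ : Form A AP} (B : Finset A) (hB : B.Nonempty) :
      Prf Ax φ → Prf Ax (Form.dk B hB φ)
  | axK {φ ψ : Form A AP} (B : Finset A) (hB : B.Nonempty) :
      Prf Ax ((Form.dk B hB (φ.imp ψ)).imp ((Form.dk B hB φ).imp (Form.dk B hB ψ)))
  | axB {φ : Form A AP} (B : Finset A) (hB : B.Nonempty) :
      Prf Ax (φ.imp (Form.dk B hB (Form.neg (Form.dk B hB φ.neg))))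
  | ax4 {φ : Form A AP} (B : Finset A) (hB : B.Nonempty) :
      Prf Ax ((Form.dk B hB φ).imp (Form.dk B hB (Form.dk B hB φ)))
  | axMono {φ : Form A AP} (B B' : Finset A) (hB : B.Nonempty) (hB' : B'.Nonempty)
      (hsub : B ⊆ B') : Prf Ax ((Form.dk B hB φ).imp (Form.dk B' hB' φ))
  | axUnion (B B' : Finset A) (hB : B.Nonempty) (hB' : B'.Nonempty) :
      Prf Ax (((Form.aliveGrp B hB).and (Form.aliveGrp B' hB')).imp
        (Form.aliveGrp (B ∪ B') (unionNE hB)))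
  | axNE : Prf Ax (Form.bigOr ((Finset.univ : Finset A).toList.map Form.aliveAgent))
  | axP {φ : Form A AP} (B : Finset A) (hB : B.Nonempty) :
      Prf Ax ((((Form.aliveGrp B hB).and (Form.deadGrp Bᶜ)).and φ).imp
        (Form.dk B hB ((Form.deadGrp Bᶜ).imp φ)))
  | extra {φ : Form A AP} : Ax φ → Prf Ax φ

/-- Provability in `SC` itself (no extra axioms). -/
def SC : Form A AP → Prop := Prf (fun _ => False)

/-- Instances of Axiom `Min : alive_B ∧ dead_{A∖B} ⇒ D_B dead_{A∖B}` for `B ⊊ A`. -/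
def MinAx : Form A AP → Prop := fun φ =>
  ∃ (B : Finset A) (hB : B.Nonempty), B ≠ Finset.univ ∧
    φ = ((Form.aliveGrp B hB).and (Form.deadGrp Bᶜ)).imp (Form.dk B hB (Form.deadGrp Bᶜ))

/-- Instances of Axiom `Max : alive_B ⇒ ¬ D_B ¬ dead_{A∖B}` for `B ⊊ A`. -/
def MaxAx : Form A AP → Prop := fun φ =>
  ∃ (B : Finset A) (hB : B.Nonempty), B ≠ Finset.univ ∧
    φ = (Form.aliveGrp B hB).imp (Form.neg (Form.dk B hB (Form.neg (Form.deadGrp Bᶜ))))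

/-- Provability in `SCmin = SC + Min`. -/
def SCmin : Form A AP → Prop := Prf MinAx

/-- Provability in `SCmax = SC + Max`. -/
def SCmax : Form A AP → Prop := Prf MaxAx

/-- `Γ ⊢_P φ` : some finite conjunction of members of `Γ` provably implies `φ`. -/
def ProvesFrom (P : Form A AP → Prop) (Γ : Set (Form A AP)) (φ : Form A AP) : Prop :=
  ∃ L : List (Form A AP), (∀ γ ∈ L, γ ∈ Γ) ∧ P ((Form.bigAnd L).imp φ)

/-- Consistency of a set of formulas with respect to a provability predicate `P`. -/
def ConsistentSet (P : Form A AP → Prop) (Γ : Set (Form A AP)) : Prop :=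
  ¬ ProvesFrom P Γ Form.falsum

/-- Maximal consistent sets of formulas. -/
def MaxConsistent (P : Form A AP → Prop) (Γ : Set (Form A AP)) : Prop :=
  ConsistentSet P Γ ∧ ∀ φ ∉ Γ, ¬ ConsistentSet P (insert φ Γ)

end ProofSystem

/-! ### Simplicial models -/

/-- The data of a (generalized) simplicial model: a set `S` of simplexes over the vertex
type `V`, a colouring `chi`, a set of worlds `Wld` and a labelling of worlds. -/
structure SimpData (A AP V : Type) where
  S : Set (Finset V)
  chi : V → A
  Wld : Set (Finset V)
  label : Finset V → Set AP

namespace SimpData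

variable {A AP V : Type}

/-- A facet: a simplex maximal under inclusion. -/
def IsFacet (C : SimpData A AP V) (X : Finset V) : Prop :=
  X ∈ C.S ∧ ∀ Y ∈ C.S, X ⊆ Y → X = Y

/-- `⟨V,S,chi⟩` is a chromatic simplicial complex: simplexes are nonempty, every
singleton is a simplex, `S` is downward closed, and every simplex has pairwise
distinct colours. -/
def IsComplex (C : SimpData A AP V) : Prop :=
  (∀ X ∈ C.S, X.Nonempty) ∧
  (∀ v : V, ({v} : Finset V) ∈ C.S) ∧
  (∀ X ∈ C.S, ∀ Y : Finset V, Y ⊆ X → Y.Nonempty → Y ∈ C.S) ∧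
  (∀ X ∈ C.S, ∀ v ∈ X, ∀ w ∈ X, C.chi v = C.chi w → v = w)

/-- `C` is a generalized simplicial model: a chromatic simplicial complex together
with a set of worlds `Wld` with `Facets(C) ⊆ Wld ⊆ S`. -/
def IsModel (C : SimpData A AP V) : Prop :=
  C.IsComplex ∧ (∀ X, C.IsFacet X → X ∈ C.Wld) ∧ C.Wld ⊆ C.S

/-- The model is minimal: the worlds are exactly the facets. -/
def Minimal (C : SimpData A AP V) : Prop := ∀ X, X ∈ C.Wld ↔ C.IsFacet X

/-- The model is maximal: every simplex is a world. -/
def Maximal (C : SimpData A AP V) : Prop := C.Wld = C.S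

end SimpData

/-- Satisfaction on simplicial models: `C,w ⊨ D_B φ` iff `φ` holds at every world `w'`
with `B ⊆ chi(w ∩ w')`. -/
def SimpData.sat {A AP V : Type} (C : SimpData A AP V) : Finset V → Form A AP → Prop
  | w, .atom p => p ∈ C.label w
  | w, .neg φ => ¬ C.sat w φ
  | w, .and φ ψ => C.sat w φ ∧ C.sat w ψ
  | w, .dk B _ φ => ∀ w' ∈ C.Wld, (↑B : Set A) ⊆ C.chi '' ((↑w : Set V) ∩ ↑w') → C.sat w' φ

/-! ### Partial epistemic models -/

/-- The data of a partial epistemic model: an accessibility relation for each agent and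
a labelling of worlds. -/
structure PEData (A AP W : Type) where
  rel : A → W → W → Prop
  label : W → Set AP

namespace PEData

variable {A AP W : Type}

/-- Each relation is a partial equivalence relation (symmetric and transitive). -/
def IsPE (M : PEData A AP W) : Prop := ∀ a : A, Symmetric (M.rel a) ∧ Transitive (M.rel a)

/-- The set of agents alive in a world. -/
def live (M : PEData A AP W) (w : W) : Set A := {a | M.rel a w w}

/-- Every world has at least one alive agent. -/
def NoEmptyWorld (M : PEData A AP W) : Prop := ∀ w : W, (M.live w).Nonempty

/-- Distinct worlds with the same alive agents are distinguished by some alive agent. -/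
def Proper (M : PEData A AP W) : Prop :=
  ∀ w w' : W, w ≠ w' → M.live w = M.live w' → ∃ a ∈ M.live w, ¬ M.rel a w w'

/-- The model has no sub-world. -/
def Minimal (M : PEData A AP W) : Prop :=
  ∀ w w' : W, M.live w ⊂ M.live w' → ∃ a ∈ M.live w, ¬ M.rel a w w'

/-- The model has all sub-worlds. -/
def Maximal (M : PEData A AP W) : Prop :=
  ∀ w' : W, ∀ B : Set A, B.Nonempty → B ⊂ M.live w' →
    ∃ w : W, M.live w = B ∧ ∀ a ∈ B, M.rel a w w'

end PEData

/-- Satisfaction on partial epistemic models: `M,w ⊨ D_B φ` iff `φ` holds at every `w'`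
with `w ∼_a w'` for all `a ∈ B`. -/
def PEData.sat {A AP W : Type} (M : PEData A AP W) : W → Form A AP → Prop
  | w, .atom p => p ∈ M.label w
  | w, .neg φ => ¬ M.sat w φ
  | w, .and φ ψ => M.sat w φ ∧ M.sat w ψ
  | w, .dk B _ φ => ∀ w' : W, (∀ a ∈ B, M.rel a w w') → M.sat w' φ

/-- The partial epistemic model `κ(C)` associated with a simplicial model `C`:
same worlds, `w ∼_a w'` iff `a ∈ chi(w ∩ w')`, same labelling. -/
def kappa {A AP V : Type} (C : SimpData A AP V) : PEData A AP {w : Finset V // w ∈ C.Wld} where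
  rel := fun a w w' => a ∈ C.chi '' ((↑w.1 : Set V) ∩ ↑w'.1)
  label := fun w => C.label w.1

/-- Vertices of `σ(M)`: pairs `v^w_a = (a, [w]_a)` with `a` alive in `w`. -/
def sigmaVert {A AP W : Type} (M : PEData A AP W) : Type :=
  {v : A × Set W // ∃ w : W, M.rel v.1 w w ∧ v.2 = {w' | M.rel v.1 w w'}}

/-- The world `X_w = { v^w_a | a ∈ live(w) }` of `σ(M)`. -/
def sigmaWorld {A AP W : Type} [Fintype A] (M : PEData A AP W) (w : W) :
    Finset (sigmaVert M) :=
  ((Finset.univ : Finset A).filter (fun a => M.rel a w w)).attach.image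
    (fun a => ⟨(a.1, {w' | M.rel a.1 w w'}),
      ⟨w, by exact (Finset.mem_filter.mp a.2).2, rfl⟩⟩)

/-- The simplicial model `σ(M)` associated with a partial epistemic model `M`:
simplexes are the nonempty subsets of the sets `X_w`, worlds are the `X_w`,
colouring is the first projection, and `ℓ(X_w) = L(w)`. -/
def sigmaModel {A AP W : Type} [Fintype A] (M : PEData A AP W) :
    SimpData A AP (sigmaVert M) where
  S := {X | X.Nonempty ∧ ∃ w : W, X ⊆ sigmaWorld M w}
  chi := fun v => v.1.1
  Wld := {X | ∃ w : W, X = sigmaWorld M w}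
  label := fun X => {p | ∃ w : W, X = sigmaWorld M w ∧ p ∈ M.label w}

/-! ### Pseudo-models, the canonical model and unravelling -/

/-- The data of a pseudo-model: a relation `∼_B` for every group `B ⊆ A`. -/
structure PseudoData (A AP W : Type) where
  rel : Finset A → W → W → Prop
  label : W → Set AP

/-- `M` is a pseudo-model: each `∼_B` is symmetric and transitive, the relations are
antitone (`∼_{B'} ⊆ ∼_B` for `B ⊆ B'`), and `w ∼_B w` together with `w ∼_{B'} w`
implies `w ∼_{B ∪ B'} w`. -/
def PseudoData.IsPseudo {A AP W : Type} [DecidableEq A] (M : PseudoData A AP W) : Prop :=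
  (∀ B : Finset A, Symmetric (M.rel B)) ∧
  (∀ B : Finset A, Transitive (M.rel B)) ∧
  (∀ B B' : Finset A, B ⊆ B' → ∀ w w' : W, M.rel B' w w' → M.rel B w w') ∧
  (∀ (w : W) (B B' : Finset A), M.rel B w w → M.rel B' w w → M.rel (B ∪ B') w w)

/-- Satisfaction on pseudo-models: `D_B φ` quantifies over `∼_B`-successors. -/
def PseudoData.sat {A AP W : Type} (M : PseudoData A AP W) : W → Form A AP → Prop
  | w, .atom p => p ∈ M.label w
  | w, .neg φ => ¬ M.sat w φ
  | w, .and φ ψ => M.sat w φ ∧ M.sat w ψ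
  | w, .dk B _ φ => ∀ w' : W, M.rel B w w' → M.sat w' φ

/-- The canonical pseudo-model of a proof system `P`: worlds are the maximal
`P`-consistent sets, `Γ ∼_B Δ` iff every `φ` with `D_B φ ∈ Γ` satisfies `φ ∈ Δ`,
and `L(Γ) = Γ ∩ AP`. -/
def canonicalPsm (A AP : Type) [Fintype A] [Nonempty AP] (P : Form A AP → Prop) :
    PseudoData A AP {Γ : Set (Form A AP) // MaxConsistent P Γ} where
  rel := fun B Γ Δ => ∀ (hB : B.Nonempty) (φ : Form A AP), Form.dk B hB φ ∈ Γ.1 → φ ∈ Δ.1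
  label := fun Γ => {p | Form.atom p ∈ Γ.1}

/-- `IsHist M w l` : the sequence starting at `w` with steps `l` is a history of `M`. -/
def IsHist {A AP W : Type} (M : PseudoData A AP W) : W → List (Finset A × W) → Prop
  | _, [] => True
  | w, (B, w') :: t => M.rel B w w' ∧ IsHist M w' t

/-- A history `(w₀, B₁, w₁, …, B_k, w_k)` of a pseudo-model `M`. -/
structure Hist {A AP W : Type} (M : PseudoData A AP W) where
  first : W
  steps : List (Finset A × W)
  valid : IsHist M first steps

/-- The last world of a history. -/
def Hist.last {A AP W : Type} {M : PseudoData A AP W} (h : Hist M) : W :=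
  (h.steps.map Prod.snd).getLastD h.first

/-- `h →_a h'` : `h'` extends `h` by one step `(B, w)` with `a ∈ B`. -/
def histStep {A AP W : Type} (M : PseudoData A AP W) (a : A) (h h' : Hist M) : Prop :=
  ∃ (B : Finset A) (w : W), a ∈ B ∧ h'.first = h.first ∧ h'.steps = h.steps ++ [(B, w)]

/-- `∼^U_a` : the symmetric-transitive closure of `→_a`. -/
def histRel {A AP W : Type} (M : PseudoData A AP W) (a : A) : Hist M → Hist M → Prop :=
  Relation.TransGen (fun h h' => histStep M a h h' ∨ histStep M a h' h)

/-- The unravelling `U(M)` of a pseudo-model `M`: worlds are histories, relations are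
the `∼^U_a`, and `L^U(h) = L(last h)`. -/
def unravel {A AP W : Type} (M : PseudoData A AP W) : PEData A AP (Hist M) where
  rel := histRel M
  label := fun h => M.label h.last

/-- World-equivalence `w ≡ w'` : same alive agents and related by every alive agent. -/
def pequiv {A AP W : Type} (M : PEData A AP W) (w w' : W) : Prop :=
  M.live w = M.live w' ∧ ∀ a ∈ M.live w, M.rel a w w'

/-- The quotient of a partial epistemic model by world-equivalence. -/
def properify {A AP W : Type} (M : PEData A AP W) : PEData A AP (Quot (pequiv M)) where
  rel := fun a x y => ∃ w w' : W, x = Quot.mk _ w ∧ y = Quot.mk _ w' ∧ M.rel a w w'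
  label := fun x => {p | ∃ w : W, x = Quot.mk _ w ∧ p ∈ M.label w}

/-! ### Local simplicial models, morphisms and the guarded positive fragment -/

/-- The data of a local simplicial model: atomic propositions label the vertices. -/
structure LocalSimpData (A AP V : Type) where
  S : Set (Finset V)
  chi : V → A
  Wld : Set (Finset V)
  vlabel : V → Set AP

namespace LocalSimpData

variable {A AP V : Type}

/-- A facet: a simplex maximal under inclusion. -/
def IsFacet (C : LocalSimpData A AP V) (X : Finset V) : Prop :=
  X ∈ C.S ∧ ∀ Y ∈ C.S, X ⊆ Y → X = Y

/-- `C` is a local simplicial model with respect to the ownership map `owner : AP → A`: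
a chromatic simplicial complex with `Facets ⊆ Wld ⊆ S`, where each vertex is labelled
with atomic propositions belonging to its colour. -/
def IsModel (C : LocalSimpData A AP V) (owner : AP → A) : Prop :=
  (∀ X ∈ C.S, X.Nonempty) ∧
  (∀ v : V, ({v} : Finset V) ∈ C.S) ∧
  (∀ X ∈ C.S, ∀ Y : Finset V, Y ⊆ X → Y.Nonempty → Y ∈ C.S) ∧
  (∀ X ∈ C.S, ∀ v ∈ X, ∀ w ∈ X, C.chi v = C.chi w → v = w) ∧
  (∀ X, C.IsFacet X → X ∈ C.Wld) ∧ C.Wld ⊆ C.S ∧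
  (∀ v : V, ∀ p ∈ C.vlabel v, owner p = C.chi v)

/-- The labelling of a world: the union of the labellings of its vertices. -/
def wlabel (C : LocalSimpData A AP V) (X : Finset V) : Set AP :=
  ⋃ v ∈ X, C.vlabel v

end LocalSimpData

/-- Purely propositional formulas. -/
inductive PForm (AP : Type) : Type
  | atom : AP → PForm AP
  | neg : PForm AP → PForm AP
  | and : PForm AP → PForm AP → PForm AP

/-- The atomic propositions occurring in a propositional formula. -/
def PForm.atoms {AP : Type} : PForm AP → Set AP
  | .atom p => {p}
  | .neg ψ => ψ.atoms
  | .and ψ χ => ψ.atoms ∪ χ.atoms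

/-- Satisfaction of propositional formulas at a world of a local simplicial model. -/
def PForm.psat {A AP V : Type} (C : LocalSimpData A AP V) (w : Finset V) : PForm AP → Prop
  | .atom p => p ∈ C.wlabel w
  | .neg ψ => ¬ PForm.psat C w ψ
  | .and ψ χ => PForm.psat C w ψ ∧ PForm.psat C w χ

/-- The guarded positive epistemic fragment:
`φ ::= (alive_B ⇒ ψ_B) | φ∧φ | φ∨φ | D_U φ | C_U φ`. -/
inductive GForm (A AP : Type) : Type
  | guard : Finset A → PForm AP → GForm A AP
  | and : GForm A AP → GForm A AP → GForm A AP
  | or : GForm A AP → GForm A AP → GForm A AP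
  | dk : Finset A → GForm A AP → GForm A AP
  | ck : Finset A → GForm A AP → GForm A AP

/-- Well-formedness of guarded formulas: in a guard `alive_B ⇒ ψ_B`, all atomic
propositions of `ψ_B` belong to agents of `B`. -/
def GForm.WF {A AP : Type} (owner : AP → A) : GForm A AP → Prop
  | .guard B ψ => ∀ p ∈ ψ.atoms, owner p ∈ B
  | .and φ₁ φ₂ => φ₁.WF owner ∧ φ₂.WF owner
  | .or φ₁ φ₂ => φ₁.WF owner ∧ φ₂.WF owner
  | .dk _ φ => φ.WF owner
  | .ck _ φ => φ.WF owner

/-- Reachability through a sequence of worlds, consecutive ones sharing a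
`U`-coloured simplex. -/
def creach {A AP V : Type} (C : LocalSimpData A AP V) (U : Finset A) :
    Finset V → Finset V → Prop :=
  Relation.ReflTransGen
    (fun X Y => Y ∈ C.Wld ∧ (↑U : Set A) ⊆ C.chi '' ((↑X : Set V) ∩ ↑Y))

/-- Satisfaction of guarded positive formulas on local simplicial models. -/
def GForm.gsat {A AP V : Type} (C : LocalSimpData A AP V) :
    Finset V → GForm A AP → Prop
  | w, .guard B ψ => ((↑B : Set A) ⊆ C.chi '' (↑w : Set V)) → ψ.psat C w
  | w, .and φ₁ φ₂ => φ₁.gsat C w ∧ φ₂.gsat C w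
  | w, .or φ₁ φ₂ => φ₁.gsat C w ∨ φ₂.gsat C w
  | w, .dk U φ => ∀ w' ∈ C.Wld, (↑U : Set A) ⊆ C.chi '' ((↑w : Set V) ∩ ↑w') → φ.gsat C w'
  | w, .ck U φ => ∀ w' ∈ C.Wld, creach C U w w' → φ.gsat C w'

/-- Image of a simplex under a vertex map. -/
def fimage {V V' : Type} (f : V → V') (X : Finset V) : Finset V' :=
  X.image f

/-- Morphisms of local simplicial models: map simplexes to simplexes and worlds to
worlds, preserving colours and vertex labellings. -/
def IsMorphism {A AP V V' : Type} (C : LocalSimpData A AP V) (D : LocalSimpData A AP V')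
    (f : V → V') : Prop :=
  (∀ X ∈ C.S, fimage f X ∈ D.S) ∧
  (∀ X ∈ C.Wld, fimage f X ∈ D.Wld) ∧
  (∀ v : V, D.chi (f v) = C.chi v) ∧
  (∀ v : V, D.vlabel (f v) = C.vlabel v)

end

section Helpers

variable {A AP : Type} [Fintype A] [Nonempty AP]

open Form

set_option linter.unusedSectionVars false
set_option linter.unnecessarySimpa false

private lemma v_or' (v : Form A AP → Prop) (hneg : ∀ ψ, v ψ.neg ↔ ¬ v ψ)
    (hand : ∀ ψ χ, v (ψ.and χ) ↔ (v ψ ∧ v χ)) (φ ψ : Form A AP) :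
    v (φ.or ψ) ↔ (v φ ∨ v ψ) := by
  unfold Form.or; rw [hneg, hand, hneg, hneg]; tauto

private lemma v_imp' (v : Form A AP → Prop) (hneg : ∀ ψ, v ψ.neg ↔ ¬ v ψ)
    (hand : ∀ ψ χ, v (ψ.and χ) ↔ (v ψ ∧ v χ)) (φ ψ : Form A AP) :
    v (φ.imp ψ) ↔ (v φ → v ψ) := by
  unfold Form.imp; rw [v_or' v hneg hand, hneg]; tauto

private lemma v_verum' (v : Form A AP → Prop) (hneg : ∀ ψ, v ψ.neg ↔ ¬ v ψ)
    (hand : ∀ ψ χ, v (ψ.and χ) ↔ (v ψ ∧ v χ)) :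
    v (Form.verum : Form A AP) ↔ True := by
  unfold Form.verum; rw [v_or' v hneg hand, hneg]; tauto

private lemma v_falsum' (v : Form A AP → Prop) (hneg : ∀ ψ, v ψ.neg ↔ ¬ v ψ)
    (hand : ∀ ψ χ, v (ψ.and χ) ↔ (v ψ ∧ v χ)) :
    v (Form.falsum : Form A AP) ↔ False := by
  unfold Form.falsum; rw [hneg, v_verum' v hneg hand]; tauto

variable {Ax : Form A AP → Prop}

private lemma prf_mp2 {φ ψ χ : Form A AP} (h : Prf Ax (φ.imp (ψ.imp χ)))
    (h1 : Prf Ax φ) (h2 : Prf Ax ψ) : Prf Ax χ :=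
  Prf.mp (Prf.mp h h1) h2

private lemma prf_imp_trans {φ ψ χ : Form A AP} (h1 : Prf Ax (φ.imp ψ))
    (h2 : Prf Ax (ψ.imp χ)) : Prf Ax (φ.imp χ) := by
  refine prf_mp2 (Prf.taut ?_) h1 h2
  intro v hneg hand
  simp only [v_imp' v hneg hand]; tauto

private lemma prf_k_mono {φ ψ : Form A AP} {B : Finset A} {hB : B.Nonempty}
    (h : Prf Ax (φ.imp ψ)) : Prf Ax ((Form.dk B hB φ).imp (Form.dk B hB ψ)) :=
  Prf.mp (Prf.axK B hB) (Prf.nec B hB h)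

private lemma prf_bigAnd_elim {L : List (Form A AP)} {γ : Form A AP} (hγ : γ ∈ L) :
    Prf Ax ((Form.bigAnd L).imp γ) := by
  induction L with
  | nil => simp at hγ
  | cons φ t ih =>
    rcases List.mem_cons.mp hγ with rfl | hmem
    · exact Prf.taut (fun v hneg hand => by
        simp only [Form.bigAnd, v_imp' v hneg hand, hand]; tauto)
    · refine Prf.mp (Prf.taut ?_) (ih hmem)
      intro v hneg hand
      simp only [Form.bigAnd, v_imp' v hneg hand, hand]; tauto

private lemma prf_bigAnd_intro {X : Form A AP} {L : List (Form A AP)}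
    (h : ∀ γ ∈ L, Prf Ax (X.imp γ)) : Prf Ax (X.imp (Form.bigAnd L)) := by
  induction L with
  | nil =>
    exact Prf.taut (fun v hneg hand => by
      simp only [Form.bigAnd, v_imp' v hneg hand, v_verum' v hneg hand]; tauto)
  | cons φ t ih =>
    have h1 : Prf Ax (X.imp φ) := h φ List.mem_cons_self
    have h2 : Prf Ax (X.imp (Form.bigAnd t)) := ih (fun γ hγ => h γ (List.mem_cons_of_mem _ hγ))
    refine prf_mp2 (Prf.taut ?_) h1 h2
    intro v hneg hand
    simp only [Form.bigAnd, v_imp' v hneg hand, hand]; tauto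

/-- From an inconsistent extension, extract an implication of `falsum`. -/
private lemma insert_incons_extract {Γ : Set (Form A AP)} {φ : Form A AP}
    (hΓ : MaxConsistent (Prf Ax) Γ) (hφ : φ ∉ Γ) :
    ∃ L : List (Form A AP), (∀ γ ∈ L, γ ∈ Γ) ∧
      Prf Ax ((φ.and (Form.bigAnd L)).imp Form.falsum) := by
  have hni := hΓ.2 φ hφ
  rw [ConsistentSet, not_not] at hni
  obtain ⟨L, hLmem, hL⟩ := hni
  refine ⟨L.filter (fun γ => γ ≠ φ), ?_, ?_⟩
  · intro γ hγ
    have := List.mem_filter.mp hγ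
    rcases hLmem γ this.1 with h | h
    · exact absurd h (by simpa using this.2)
    · exact h
  · have hent : Prf Ax ((Form.bigAnd (φ :: L.filter (fun γ => γ ≠ φ))).imp (Form.bigAnd L)) := by
      refine prf_bigAnd_intro ?_
      intro γ hγ
      by_cases hc : γ = φ
      · subst hc; exact prf_bigAnd_elim List.mem_cons_self
      · refine prf_bigAnd_elim (List.mem_cons_of_mem _ ?_)
        exact List.mem_filter.mpr ⟨hγ, by simpa using hc⟩
    have := prf_imp_trans hent hL
    refine Prf.mp (Prf.taut ?_) this
    intro v hneg hand
    simp only [Form.bigAnd, v_imp' v hneg hand, hand]; tauto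

/-- Maximal consistent sets are closed under `ProvesFrom`. -/
private lemma mcs_closed {Γ : Set (Form A AP)} (hΓ : MaxConsistent (Prf Ax) Γ)
    {φ : Form A AP} (h : ProvesFrom (Prf Ax) Γ φ) : φ ∈ Γ := by
  by_contra hφ
  obtain ⟨M, hMmem, hM⟩ := h
  obtain ⟨L, hLmem, hL⟩ := insert_incons_extract hΓ hφ
  refine hΓ.1 ⟨M ++ L, ?_, ?_⟩
  · intro γ hγ
    rcases List.mem_append.mp hγ with h | h
    · exact hMmem γ h
    · exact hLmem γ h
  · have h1 : Prf Ax ((Form.bigAnd (M ++ L)).imp φ) := by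
      refine prf_imp_trans (prf_bigAnd_intro ?_) hM
      exact fun γ hγ => prf_bigAnd_elim (List.mem_append_left _ hγ)
    have h2 : Prf Ax ((Form.bigAnd (M ++ L)).imp (Form.bigAnd L)) := by
      refine prf_bigAnd_intro ?_
      exact fun γ hγ => prf_bigAnd_elim (List.mem_append_right _ hγ)
    have h3 : Prf Ax ((Form.bigAnd (M ++ L)).imp (φ.and (Form.bigAnd L))) := by
      refine prf_mp2 (Prf.taut ?_) h1 h2
      intro v hneg hand
      simp only [v_imp' v hneg hand, hand]; tauto
    exact prf_imp_trans h3 hL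

private lemma mcs_prf {Γ : Set (Form A AP)} (hΓ : MaxConsistent (Prf Ax) Γ)
    {φ : Form A AP} (h : Prf Ax φ) : φ ∈ Γ := by
  refine mcs_closed hΓ ⟨[], by simp, ?_⟩
  refine Prf.mp (Prf.taut ?_) h
  intro v hneg hand
  simp only [v_imp' v hneg hand]; tauto

private lemma mcs_mp {Γ : Set (Form A AP)} (hΓ : MaxConsistent (Prf Ax) Γ)
    {φ ψ : Form A AP} (hmem : φ ∈ Γ) (h : Prf Ax (φ.imp ψ)) : ψ ∈ Γ := by
  refine mcs_closed hΓ ⟨[φ], by simpa using hmem, ?_⟩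
  refine Prf.mp (Prf.taut ?_) h
  intro v hneg hand
  simp only [Form.bigAnd, v_imp' v hneg hand, hand]; tauto

private lemma mcs_mp2 {Γ : Set (Form A AP)} (hΓ : MaxConsistent (Prf Ax) Γ)
    {φ ψ : Form A AP} (hmem : φ ∈ Γ) (himp : φ.imp ψ ∈ Γ) : ψ ∈ Γ := by
  refine mcs_closed hΓ ⟨[φ, φ.imp ψ], by simp [hmem, himp], ?_⟩
  refine Prf.taut ?_
  intro v hneg hand
  simp only [Form.bigAnd, v_imp' v hneg hand, hand]; tauto

private lemma mcs_falsum_not_mem {Γ : Set (Form A AP)} (hΓ : MaxConsistent (Prf Ax) Γ) :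
    Form.falsum ∉ Γ := by
  intro hmem
  refine hΓ.1 ⟨[Form.falsum], by simpa using hmem, Prf.taut ?_⟩
  intro v hneg hand
  simp only [Form.bigAnd, v_imp' v hneg hand, hand]; tauto

private lemma mcs_neg_of_not_mem {Γ : Set (Form A AP)} (hΓ : MaxConsistent (Prf Ax) Γ)
    {φ : Form A AP} (hφ : φ ∉ Γ) : φ.neg ∈ Γ := by
  obtain ⟨L, hLmem, hL⟩ := insert_incons_extract hΓ hφ
  refine mcs_closed hΓ ⟨L, hLmem, ?_⟩
  refine Prf.mp (Prf.taut ?_) hL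
  intro v hneg hand
  simp only [v_imp' v hneg hand, hand, hneg, v_falsum' v hneg hand]; tauto

private lemma mcs_not_mem_of_neg {Γ : Set (Form A AP)} (hΓ : MaxConsistent (Prf Ax) Γ)
    {φ : Form A AP} (hφ : φ.neg ∈ Γ) : φ ∉ Γ := by
  intro hmem
  refine hΓ.1 ⟨[φ, φ.neg], by simp [hmem, hφ], Prf.taut ?_⟩
  intro v hneg hand
  simp only [Form.bigAnd, v_imp' v hneg hand, hand, hneg, v_falsum' v hneg hand]; tauto

private lemma mcs_mem_of_neg_not_mem {Γ : Set (Form A AP)} (hΓ : MaxConsistent (Prf Ax) Γ)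
    {φ : Form A AP} (hφ : φ.neg ∉ Γ) : φ ∈ Γ := by
  have := mcs_neg_of_not_mem hΓ hφ
  by_contra hmem
  exact mcs_not_mem_of_neg hΓ this (mcs_neg_of_not_mem hΓ hmem)

/-! ### Canonical-model lemmas -/

private lemma canon_rel_symm {B : Finset A}
    {Γ Δ : {Γ : Set (Form A AP) // MaxConsistent (SC (A := A) (AP := AP)) Γ}}
    (hrel : (canonicalPsm A AP SC).rel B Γ Δ) : (canonicalPsm A AP SC).rel B Δ Γ := by
  intro hB ψ hmem
  by_contra hψ
  have hnψ : ψ.neg ∈ Γ.1 := mcs_neg_of_not_mem Γ.2 hψ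
  have h1 : Form.dk B hB (Form.neg (Form.dk B hB ψ.neg.neg)) ∈ Γ.1 :=
    mcs_mp Γ.2 hnψ (Prf.axB B hB)
  have h2 : Form.neg (Form.dk B hB ψ.neg.neg) ∈ Δ.1 := hrel hB _ h1
  have h3 : Form.dk B hB ψ.neg.neg ∈ Δ.1 := by
    refine mcs_mp Δ.2 hmem (prf_k_mono (Prf.taut ?_))
    intro v hneg hand
    simp only [v_imp' v hneg hand, hneg]; tauto
  exact mcs_not_mem_of_neg Δ.2 h2 h3

private lemma canon_alive_src {a : A} {B : Finset A} (haB : a ∈ B)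
    {Γ Δ : {Γ : Set (Form A AP) // MaxConsistent (SC (A := A) (AP := AP)) Γ}}
    (hrel : (canonicalPsm A AP SC).rel B Γ Δ) : Form.aliveAgent a ∈ Γ.1 := by
  refine mcs_mem_of_neg_not_mem Γ.2 ?_
  intro hmem
  have hdead : Form.deadAgent a ∈ Γ.1 := by
    refine mcs_mp Γ.2 hmem (Prf.taut ?_)
    intro v hneg hand
    simp only [Form.aliveAgent, v_imp' v hneg hand, hneg]; tauto
  have hB : B.Nonempty := ⟨a, haB⟩
  have hdkB : Form.dk B hB Form.falsum ∈ Γ.1 :=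
    mcs_mp Γ.2 hdead (Prf.axMono {a} B (Finset.singleton_nonempty a) hB (by simpa using haB))
  exact mcs_falsum_not_mem Δ.2 (hrel hB _ hdkB)

private lemma canon_alive_tgt {a : A} {B : Finset A} (haB : a ∈ B)
    {Γ Δ : {Γ : Set (Form A AP) // MaxConsistent (SC (A := A) (AP := AP)) Γ}}
    (hrel : (canonicalPsm A AP SC).rel B Γ Δ) : Form.aliveAgent a ∈ Δ.1 :=
  canon_alive_src haB (canon_rel_symm hrel)

private lemma canon_refl_of_alive {a : A}
    {Γ : {Γ : Set (Form A AP) // MaxConsistent (SC (A := A) (AP := AP)) Γ}}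
    (halive : Form.aliveAgent a ∈ Γ.1) : (canonicalPsm A AP SC).rel {a} Γ Γ := by
  intro hB φ hmem
  by_contra hφ
  have hnφ : φ.neg ∈ Γ.1 := mcs_neg_of_not_mem Γ.2 hφ
  -- χ := D_{a} ¬¬φ
  set χ : Form A AP := Form.dk {a} hB φ.neg.neg with hχ
  have h1 : χ ∈ Γ.1 := by
    refine mcs_mp Γ.2 hmem (prf_k_mono (Prf.taut ?_))
    intro v hneg hand
    simp only [v_imp' v hneg hand, hneg]; tauto
  have h2 : Form.dk {a} hB χ.neg ∈ Γ.1 := mcs_mp Γ.2 hnφ (Prf.axB {a} hB)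
  have h3 : Form.dk {a} hB χ ∈ Γ.1 := mcs_mp Γ.2 h1 (Prf.ax4 {a} hB)
  have h4 : Form.dk {a} hB (χ.neg.imp Form.falsum) ∈ Γ.1 := by
    refine mcs_mp Γ.2 h3 (prf_k_mono (Prf.taut ?_))
    intro v hneg hand
    simp only [v_imp' v hneg hand, hneg, v_falsum' v hneg hand]; tauto
  have h5 : (Form.dk {a} hB χ.neg).imp (Form.dk {a} hB Form.falsum) ∈ Γ.1 :=
    mcs_mp Γ.2 h4 (Prf.axK {a} hB)
  have h6 : Form.dk {a} hB Form.falsum ∈ Γ.1 := mcs_mp2 Γ.2 h2 h5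
  have h7 : Form.deadAgent a ∈ Γ.1 := h6
  exact mcs_not_mem_of_neg Γ.2 halive h7

/-! ### History lemmas -/

private lemma isHist_append {W : Type} {M : PseudoData A AP W} {w : W}
    {l : List (Finset A × W)} (hl : IsHist M w l) {B : Finset A} {Δ : W}
    (hrel : M.rel B ((l.map Prod.snd).getLastD w) Δ) :
    IsHist M w (l ++ [(B, Δ)]) := by
  induction l generalizing w with
  | nil => exact ⟨hrel, trivial⟩
  | cons p t ih =>
    obtain ⟨h1, h2⟩ := hl
    rw [List.map_cons, List.getLastD_cons] at hrel
    exact ⟨h1, ih h2 hrel⟩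

private lemma isHist_last_rel {W : Type} {M : PseudoData A AP W} {w : W}
    {l : List (Finset A × W)} {B : Finset A} {Δ : W}
    (hl : IsHist M w (l ++ [(B, Δ)])) :
    M.rel B ((l.map Prod.snd).getLastD w) Δ := by
  induction l generalizing w with
  | nil => exact hl.1
  | cons p t ih =>
    obtain ⟨_, h2⟩ := hl
    rw [List.map_cons, List.getLastD_cons]
    exact ih h2

private lemma hist_last_append {W : Type} {M : PseudoData A AP W} {h : Hist M}
    {l : List (Finset A × W)} {B : Finset A} {Δ : W}
    (hsteps : h.steps = l ++ [(B, Δ)]) : h.last = Δ := by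
  unfold Hist.last
  rw [hsteps, List.map_append]
  simpa using List.getLastD_concat h.first Δ (l.map Prod.snd)

end Helpers

/-- Alive agents in histories of the canonical model: for a history `h`
of `Mc` with `Γ = last(h)`, agent `a` is alive in `h` in the unravelling `U(Mc)`
(i.e. `h ∼^U_a h`) iff `alive_a ∈ Γ`. -/
theorem alive_in_history (A AP : Type) [Fintype A] [Nonempty AP]
    (h : Hist (canonicalPsm A AP SC)) (a : A) :
    histRel (canonicalPsm A AP SC) a h h ↔ Form.aliveAgent a ∈ h.last.1 := by
  constructor
  · intro hrel
    have hex : ∃ c, histStep (canonicalPsm A AP SC) a c h ∨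
        histStep (canonicalPsm A AP SC) a h c := by
      cases hrel with
      | single hr => exact ⟨h, hr⟩
      | tail _ hr => exact ⟨_, hr⟩
    obtain ⟨c, hr | hr⟩ := hex
    · obtain ⟨B, Δ, haB, hfirst, hsteps⟩ := hr
      have hlast : h.last = Δ := hist_last_append hsteps
      have hv := h.valid
      rw [hsteps] at hv
      have hrel' := isHist_last_rel hv
      rw [hlast]
      exact canon_alive_tgt haB hrel'
    · obtain ⟨B, Δ, haB, hfirst, hsteps⟩ := hr
      have hv := c.valid
      rw [hsteps, hfirst] at hv
      have hrel' := isHist_last_rel hv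
      exact canon_alive_src haB hrel'
  · intro halive
    have hrefl := canon_refl_of_alive (a := a) halive
    have hv : IsHist (canonicalPsm A AP SC) h.first (h.steps ++ [({a}, h.last)]) :=
      isHist_append h.valid hrefl
    have hstep : histStep (canonicalPsm A AP SC) a h ⟨h.first, h.steps ++ [({a}, h.last)], hv⟩ :=
      ⟨{a}, h.last, Finset.mem_singleton_self a, rfl, rfl⟩
    have h1 : histRel (canonicalPsm A AP SC) a h
        ⟨h.first, h.steps ++ [({a}, h.last)], hv⟩ :=
      Relation.TransGen.single (Or.inl hstep)
    exact h1.tail (Or.inr hstep)
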